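/- Let ξ(i) be i.i.d. symmetric random variables with P(|ξ(i)| > x) = exp(-x^m), m > 1, and let η ~ Geometric on {1,2,…} with mean A ≥ 2, independent of {ξ(i)}. Set M = min(m, 2) (taking m ∈ (1,2] so M = m, say), and S = Σ_{i=1}^{η} ξ(i)/√A. Suppose the lower bound P(n^{-1/2} Σ_{i=1}^{n} ξ(i) > u) ≥ exp(-C₁ u^M) holds for all n ≥ 1 and u ≥ 2 (with C₁ depending only on m). Then for all sufficiently large x, P(S > x) ≥ C₆(m) exp(-C₇(m) x^{2M/(M+2)}). -/

import Mathlib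

open MeasureTheory ProbabilityTheory Real Finset

/-- Elementary inequality: `exp (-(4 t)) ≤ 1 - t` for `0 ≤ t ≤ 3/4`. -/
lemma stmt17_exp_aux (t : ℝ) (ht0 : 0 ≤ t) (ht : t ≤ 3/4) :
    Real.exp (-(4 * t)) ≤ 1 - t := by
  have h1 : (1:ℝ) + 4 * t ≤ Real.exp (4 * t) := by
    have := Real.add_one_le_exp (4 * t); linarith
  have hprod : Real.exp (-(4 * t)) * Real.exp (4 * t) = 1 := by
    rw [← Real.exp_add]; simp
  have hpos : 0 < Real.exp (-(4 * t)) := Real.exp_pos _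
  nlinarith [mul_le_mul_of_nonneg_left h1 hpos.le]

set_option maxHeartbeats 1000000 in
/-- Theorem 2 (case `r = 0`): lower bound for the tail of a geometric random sum of
i.i.d. symmetric Weibull-type variables: `P(S > x) ≥ C₆ exp(-C₇ x^{2M/(M+2)})`
for all sufficiently large `x`, where `M = m ∈ (1,2]`. -/
theorem stmt17
    {Ω : Type*} [MeasurableSpace Ω] (μ : Measure Ω) [IsProbabilityMeasure μ]
    (ξ : ℕ → Ω → ℝ) (η : Ω → ℕ) (m A C₁ : ℝ)
    (hm : 1 < m) (hm2 : m ≤ 2) (hA : 2 ≤ A) (hC₁ : 0 < C₁)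
    (hξmeas : ∀ i, Measurable (ξ i))
    (hηmeas : Measurable η)
    (hindep : iIndepFun ξ μ)
    (hident : ∀ i, IdentDistrib (ξ i) (ξ 0) μ μ)
    (hsymm : μ.map (ξ 0) = μ.map (fun ω => -ξ 0 ω))
    (htail : ∀ i, ∀ x : ℝ, 0 ≤ x →
      (μ {ω | x < |ξ i ω|}).toReal = Real.exp (-(x ^ m)))
    (hη1 : ∀ ω, 1 ≤ η ω)
    (hgeom : ∀ n : ℕ, 1 ≤ n →
      μ {ω | η ω = n} = ENNReal.ofReal (A⁻¹ * (1 - 1 / A) ^ (n - 1)))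
    (hηindep : IndepFun η (fun ω i => ξ i ω) μ)
    (hlower : ∀ n : ℕ, 1 ≤ n → ∀ u : ℝ, 2 ≤ u →
      Real.exp (-C₁ * u ^ m)
        ≤ (μ {ω | u < (∑ i ∈ Finset.range n, ξ i ω) / Real.sqrt n}).toReal) :
    ∃ C₆ C₇ : ℝ, 0 < C₆ ∧ 0 < C₇ ∧ ∃ x₀ : ℝ, ∀ x : ℝ, x₀ ≤ x →
      C₆ * Real.exp (-C₇ * x ^ (2 * m / (m + 2)))
        ≤ (μ {ω | x < (∑ i ∈ Finset.range (η ω), ξ i ω) / Real.sqrt A}).toReal := by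
  have hA0 : (0:ℝ) < A := by linarith
  have hm0 : (0:ℝ) < m := by linarith
  have hm2' : (0:ℝ) < m + 2 := by linarith
  set p : ℝ := 2 * m / (m + 2) with hp_def
  have hp0 : 0 < p := by positivity
  have hp1 : p ≤ 1 := by rw [hp_def, div_le_one hm2']; linarith
  refine ⟨A⁻¹, 4 + C₁, by positivity, by positivity, 8, ?_⟩
  intro x hx
  have hx0 : (0:ℝ) < x := by linarith
  have hx1 : (1:ℝ) ≤ x := by linarith
  have hxp1 : (1:ℝ) ≤ x ^ p := Real.one_le_rpow hx1 hp0.le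
  have hxp0 : (0:ℝ) < x ^ p := by linarith
  -- choice of n
  set n : ℕ := ⌈A * x ^ p⌉₊ with hn_def
  have hAx2 : (2:ℝ) ≤ A * x ^ p := by nlinarith
  have hn_ge : A * x ^ p ≤ (n:ℝ) := Nat.le_ceil _
  have hn1 : 1 ≤ n := Nat.one_le_ceil_iff.2 (by linarith)
  have hn_lt : (n:ℝ) < A * x ^ p + 1 := Nat.ceil_lt_add_one (by linarith)
  have hn_le : (n:ℝ) ≤ 2 * (A * x ^ p) := by nlinarith
  have hn0 : (0:ℝ) < (n:ℝ) := by exact_mod_cast hn1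
  have hsn : 0 < Real.sqrt n := Real.sqrt_pos.2 hn0
  have hsA : 0 < Real.sqrt A := Real.sqrt_pos.2 hA0
  -- the auxiliary threshold u
  set u : ℝ := x * Real.sqrt A / Real.sqrt n with hu_def
  have hu0 : 0 ≤ u := by positivity
  -- x^(2-p) ≥ 8
  have hx2p : (8:ℝ) ≤ x ^ (2 - p) := by
    calc (8:ℝ) ≤ x := hx
    _ = x ^ (1:ℝ) := (Real.rpow_one x).symm
    _ ≤ x ^ (2 - p) := Real.rpow_le_rpow_of_exponent_le hx1 (by linarith)
  have hxsplit : x ^ (2 - p) * x ^ p = x ^ (2:ℝ) := by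
    rw [← Real.rpow_add hx0]; ring_nf
  have hx2 : x ^ (2:ℝ) = x * x := by
    rw [Real.rpow_two, sq]
  -- u ≥ 2
  have hu2 : 2 ≤ u := by
    have hkey : 8 * (A * x ^ p) ≤ A * (x * x) := by
      rw [← hx2, ← hxsplit]
      nlinarith [mul_le_mul_of_nonneg_left
        (mul_le_mul_of_nonneg_right hx2p hxp0.le) hA0.le]
    have h4n : (4:ℝ) * n ≤ A * (x * x) := by nlinarith
    have hsq : Real.sqrt (4 * n) ≤ Real.sqrt (A * (x * x)) := Real.sqrt_le_sqrt h4n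
    have h1 : Real.sqrt (4 * n) = 2 * Real.sqrt n := by
      rw [Real.sqrt_mul (by norm_num : (0:ℝ) ≤ 4), show Real.sqrt 4 = 2 by
        rw [show (4:ℝ) = 2 ^ 2 by norm_num, Real.sqrt_sq (by norm_num)]]
    have h2 : Real.sqrt (A * (x * x)) = Real.sqrt A * x := by
      rw [Real.sqrt_mul hA0.le, show x * x = x ^ 2 by ring, Real.sqrt_sq hx0.le]
    rw [hu_def, le_div_iff₀ hsn]
    rw [h1, h2] at hsq
    linarith [hsq]
  -- u^m ≤ x^p
  have hsn_ge : Real.sqrt A * x ^ (p / 2) ≤ Real.sqrt n := by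
    have h2 : Real.sqrt (A * x ^ p) = Real.sqrt A * x ^ (p / 2) := by
      rw [Real.sqrt_mul hA0.le, Real.sqrt_eq_rpow (x ^ p), ← Real.rpow_mul hx0.le,
        show p * (1/2) = p / 2 by ring]
    have h1 : Real.sqrt (A * x ^ p) ≤ Real.sqrt n := Real.sqrt_le_sqrt hn_ge
    rw [h2] at h1
    exact h1
  have hxp2pos : 0 < x ^ (p / 2) := Real.rpow_pos_of_pos hx0 _
  have hub : u ≤ x ^ (1 - p / 2) := by
    have hd : 0 < Real.sqrt A * x ^ (p / 2) := by positivity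
    have h1 : u ≤ x * Real.sqrt A / (Real.sqrt A * x ^ (p / 2)) := by
      rw [hu_def]
      exact div_le_div_of_nonneg_left (by positivity) hd hsn_ge
    have h2 : x * Real.sqrt A / (Real.sqrt A * x ^ (p / 2)) = x / x ^ (p / 2) := by
      field_simp
    have h3 : x ^ (1 - p / 2) = x / x ^ (p / 2) := by
      rw [Real.rpow_sub hx0, Real.rpow_one]
    rw [h3]; rw [h2] at h1; exact h1
  have hum : u ^ m ≤ x ^ p := by
    have h1 : u ^ m ≤ (x ^ (1 - p / 2)) ^ m := Real.rpow_le_rpow hu0 hub hm0.le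
    have h2 : (x ^ (1 - p / 2)) ^ m = x ^ ((1 - p / 2) * m) :=
      (Real.rpow_mul hx0.le _ _).symm
    have h3 : (1 - p / 2) * m = p := by
      rw [hp_def]; field_simp; ring
    rw [h2, h3] at h1; exact h1
  -- measure-theoretic part
  set F : Ω → ℕ → ℝ := fun ω i => ξ i ω with hF_def
  set T : Set (ℕ → ℝ) := {f | u < (∑ i ∈ Finset.range n, f i) / Real.sqrt n} with hT_def
  have hTmeas : MeasurableSet T := by
    have hmeas : Measurable fun f : ℕ → ℝ => (∑ i ∈ Finset.range n, f i) / Real.sqrt n :=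
      (Finset.measurable_sum _ fun i _ => measurable_pi_apply i).div_const _
    exact hmeas measurableSet_Ioi
  have hmul : μ (η ⁻¹' {n} ∩ F ⁻¹' T) = μ (η ⁻¹' {n}) * μ (F ⁻¹' T) :=
    hηindep.measure_inter_preimage_eq_mul {n} T (measurableSet_singleton n) hTmeas
  have hFT : F ⁻¹' T = {ω | u < (∑ i ∈ Finset.range n, ξ i ω) / Real.sqrt n} := rfl
  have hsub : η ⁻¹' {n} ∩ F ⁻¹' T ⊆
      {ω | x < (∑ i ∈ Finset.range (η ω), ξ i ω) / Real.sqrt A} := by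
    rintro ω ⟨h1, h2⟩
    have hηω : η ω = n := h1
    have hS : u < (∑ i ∈ Finset.range n, ξ i ω) / Real.sqrt n := h2
    have hS2 : u * Real.sqrt n < ∑ i ∈ Finset.range n, ξ i ω := (lt_div_iff₀ hsn).1 hS
    have huX : u * Real.sqrt n = x * Real.sqrt A := by
      rw [hu_def]; field_simp
    rw [Set.mem_setOf_eq, hηω, lt_div_iff₀ hsA]
    linarith [huX ▸ hS2]
  have hBn : Real.exp (-C₁ * u ^ m) ≤ (μ (F ⁻¹' T)).toReal := by
    rw [hFT]; exact hlower n hn1 u hu2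
  have hgeom_val : (μ (η ⁻¹' {n})).toReal = A⁻¹ * (1 - 1 / A) ^ (n - 1) := by
    have hset : η ⁻¹' {n} = {ω | η ω = n} := rfl
    rw [hset, hgeom n hn1, ENNReal.toReal_ofReal]
    have h1A : (0:ℝ) ≤ 1 - 1 / A := by
      have : 1 / A ≤ 1 / 2 := by
        rw [div_le_div_iff₀ hA0 (by norm_num)]; linarith
      linarith
    exact mul_nonneg (by positivity) (pow_nonneg h1A _)
  -- geometric lower bound
  have hgeom_lb : Real.exp (-(4 * x ^ p)) ≤ (1 - 1 / A) ^ (n - 1) := by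
    have htA : 1 / A ≤ 3 / 4 := by
      rw [div_le_div_iff₀ hA0 (by norm_num)]; linarith
    have h1 : Real.exp (-(4 * (1 / A))) ≤ 1 - 1 / A :=
      stmt17_exp_aux (1 / A) (by positivity) htA
    have h2 : Real.exp (-(4 * (1 / A))) ^ (n - 1) ≤ (1 - 1 / A) ^ (n - 1) :=
      pow_le_pow_left₀ (Real.exp_pos _).le h1 _
    have h3 : Real.exp (-(4 * (1 / A))) ^ (n - 1)
        = Real.exp (((n - 1 : ℕ) : ℝ) * (-(4 * (1 / A)))) :=
      (Real.exp_nat_mul _ _).symm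
    have hcast : ((n - 1 : ℕ) : ℝ) = (n : ℝ) - 1 := by
      rw [Nat.cast_sub hn1, Nat.cast_one]
    have h4 : -(4 * x ^ p) ≤ ((n - 1 : ℕ) : ℝ) * (-(4 * (1 / A))) := by
      rw [hcast]
      have hn1' : (n : ℝ) - 1 ≤ A * x ^ p := by linarith
      have : ((n:ℝ) - 1) * (4 * (1 / A)) ≤ 4 * x ^ p := by
        have h0 : (0:ℝ) ≤ (n:ℝ) - 1 := by
          have : (1:ℝ) ≤ (n:ℝ) := by exact_mod_cast hn1
          linarith
        rw [div_eq_inv_mul, mul_one] at *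
        calc ((n:ℝ) - 1) * (4 * A⁻¹) ≤ (A * x ^ p) * (4 * A⁻¹) := by
              apply mul_le_mul_of_nonneg_right hn1' (by positivity)
          _ = 4 * x ^ p := by field_simp
      nlinarith
    calc Real.exp (-(4 * x ^ p)) ≤ Real.exp (((n - 1 : ℕ) : ℝ) * (-(4 * (1 / A)))) :=
          Real.exp_le_exp.2 h4
      _ = Real.exp (-(4 * (1 / A))) ^ (n - 1) := h3.symm
      _ ≤ (1 - 1 / A) ^ (n - 1) := h2
  -- final chain
  have hfinal : A⁻¹ * Real.exp (-(4 + C₁) * x ^ p)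
      ≤ (μ (η ⁻¹' {n} ∩ F ⁻¹' T)).toReal := by
    have hsplit : Real.exp (-(4 + C₁) * x ^ p)
        = Real.exp (-(4 * x ^ p)) * Real.exp (-C₁ * x ^ p) := by
      rw [← Real.exp_add]; ring_nf
    have hexpC : Real.exp (-C₁ * x ^ p) ≤ Real.exp (-C₁ * u ^ m) := by
      apply Real.exp_le_exp.2
      nlinarith [mul_le_mul_of_nonneg_left hum hC₁.le]
    rw [hmul, ENNReal.toReal_mul, hgeom_val, hsplit]
    have hB : Real.exp (-C₁ * x ^ p) ≤ (μ (F ⁻¹' T)).toReal := hexpC.trans hBn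
    have hg0 : (0:ℝ) ≤ A⁻¹ * (1 - 1 / A) ^ (n - 1) :=
      mul_nonneg (by positivity) ((Real.exp_pos _).le.trans hgeom_lb)
    have hstep : A⁻¹ * Real.exp (-(4 * x ^ p)) * Real.exp (-C₁ * x ^ p)
        ≤ A⁻¹ * (1 - 1 / A) ^ (n - 1) * (μ (F ⁻¹' T)).toReal :=
      mul_le_mul (mul_le_mul_of_nonneg_left hgeom_lb (by positivity))
        hB (Real.exp_pos _).le hg0
    calc A⁻¹ * (Real.exp (-(4 * x ^ p)) * Real.exp (-C₁ * x ^ p))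
        = A⁻¹ * Real.exp (-(4 * x ^ p)) * Real.exp (-C₁ * x ^ p) := by ring
      _ ≤ A⁻¹ * (1 - 1 / A) ^ (n - 1) * (μ (F ⁻¹' T)).toReal := hstep
  refine hfinal.trans ?_
  apply ENNReal.toReal_mono (measure_ne_top μ _)
  exact measure_mono hsub
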